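/- Assume u carries an invariant inner product ⟨·,·⟩ (i.e., ⟨[ξ,η₁],η₂⟩ = −⟨η₁,[ξ,η₂]⟩ for all ξ, η₁, η₂ ∈ u), and assume that both g ∩ ig and g + ig are ideals of L (viewed as a real Lie algebra). Set u₁ := k ∩ ip, let u₁^⊥ be the orthogonal complement of u₁ inside u, and set k₀ := k ∩ u₁^⊥ and p₀ := p ∩ i·(u₁^⊥). Then the sum u₀ := k₀ + i·p₀ is direct (k₀ ∩ i·p₀ = 0) and u₀ is an ideal of the real Lie algebra u. -/

import Mathlib

/-- Setting of compatible subalgebras: `L` a finite-dimensional complex Lie algebra,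
`u` a real subalgebra with `L = u ⊕ i·u`, `k ⊆ u`, `p ⊆ i·u` real subspaces with
`g := k + p` a real Lie subalgebra, `B` an invariant inner product on `u`, and
`g ∩ i·g`, `g + i·g` ideals of `L`.  With `u₁ := k ∩ i·p`, `k₀ := k ∩ u₁ᗮ`,
`p₀ := p ∩ i·(u₁ᗮ)` (orthogonal complement taken inside `u`), the sum
`u₀ := k₀ + i·p₀` is direct and `u₀` is an ideal of the real Lie algebra `u`. -/
theorem u_zero_direct_and_isIdeal
    {L : Type*} [LieRing L] [LieAlgebra ℂ L] [FiniteDimensional ℂ L]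
    [Module ℝ L] [IsScalarTower ℝ ℂ L]
    (J : L →ₗ[ℝ] L) (hJ : ∀ x : L, J x = Complex.I • x)
    (u k p : Submodule ℝ L)
    (hu : ∀ x ∈ u, ∀ y ∈ u, ⁅x, y⁆ ∈ u)
    (huspan : u ⊔ u.map J = ⊤) (hudisj : u ⊓ u.map J = ⊥)
    (hk : k ≤ u) (hp : p ≤ u.map J)
    (hg : ∀ x ∈ k ⊔ p, ∀ y ∈ k ⊔ p, ⁅x, y⁆ ∈ k ⊔ p)
    (B : L →ₗ[ℝ] L →ₗ[ℝ] ℝ)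
    (hBpos : ∀ x ∈ u, x ≠ 0 → 0 < B x x)
    (hBsymm : ∀ x ∈ u, ∀ y ∈ u, B x y = B y x)
    (hBinv : ∀ ξ ∈ u, ∀ η₁ ∈ u, ∀ η₂ ∈ u, B ⁅ξ, η₁⁆ η₂ = - B η₁ ⁅ξ, η₂⁆)
    (hideal₁ : ∀ x : L, ∀ y ∈ (k ⊔ p) ⊓ (k ⊔ p).map J,
      ⁅x, y⁆ ∈ (k ⊔ p) ⊓ (k ⊔ p).map J)
    (hideal₂ : ∀ x : L, ∀ y ∈ (k ⊔ p) ⊔ ((k ⊔ p).map J),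
      ⁅x, y⁆ ∈ (k ⊔ p) ⊔ ((k ⊔ p).map J)) :
    let u₁ : Submodule ℝ L := k ⊓ p.map J
    let u₁perp : Submodule ℝ L := u ⊓ ⨅ y ∈ u₁, LinearMap.ker (B.flip y)
    let k₀ : Submodule ℝ L := k ⊓ u₁perp
    let p₀ : Submodule ℝ L := p ⊓ u₁perp.map J
    let u₀ : Submodule ℝ L := k₀ ⊔ p₀.map J
    k₀ ⊓ p₀.map J = ⊥ ∧ u₀ ≤ u ∧ ∀ x ∈ u, ∀ y ∈ u₀, ⁅x, y⁆ ∈ u₀ := by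
  intro u₁ u₁perp k₀ p₀ u₀
  haveI : FiniteDimensional ℝ L := Module.Finite.trans ℂ L
  -- basic facts about J
  have hJJ : ∀ x : L, J (J x) = -x := by
    intro x
    rw [hJ, hJ, smul_smul, Complex.I_mul_I, neg_one_smul]
  have hmapJJ : ∀ S : Submodule ℝ L, (S.map J).map J = S := by
    intro S
    ext x
    simp only [Submodule.mem_map]
    constructor
    · rintro ⟨y, ⟨z, hz, rfl⟩, rfl⟩
      rw [hJJ]
      exact S.neg_mem hz
    · intro hx
      exact ⟨J (-x), ⟨-x, S.neg_mem hx, rfl⟩, by rw [hJJ, neg_neg]⟩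
  have hJp_le_u : p.map J ≤ u := by
    calc p.map J ≤ (u.map J).map J := Submodule.map_mono hp
    _ = u := hmapJJ u
  have hu₁_le_u : u₁ ≤ u := le_trans inf_le_left hk
  have hu₁perp_le_u : u₁perp ≤ u := inf_le_left
  -- membership characterization of u₁perp
  have hmem_perp : ∀ x : L, x ∈ u₁perp ↔ x ∈ u ∧ ∀ y ∈ u₁, B x y = 0 := by
    intro x
    simp only [u₁perp, Submodule.mem_inf, Submodule.mem_iInf, LinearMap.mem_ker,
      LinearMap.flip_apply]
  -- u₁ ∩ u₁perp = 0
  have hu₁_inf_perp : ∀ x : L, x ∈ u₁ → x ∈ u₁perp → x = 0 := by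
    intro x hx₁ hxp
    by_contra hne
    have h1 := hBpos x (hu₁_le_u hx₁) hne
    have h0 : B x x = 0 := ((hmem_perp x).1 hxp).2 x hx₁
    rw [h0] at h1
    exact lt_irrefl 0 h1
  -- g ∩ ig intersected with u is u₁
  have hh_inter_u : ∀ z ∈ (k ⊔ p) ⊓ (k ⊔ p).map J, z ∈ u → z ∈ u₁ := by
    intro z hz hzu
    obtain ⟨hz1, hz2⟩ := hz
    obtain ⟨a, ha, b, hb, hab⟩ := Submodule.mem_sup.mp hz1
    obtain ⟨w, hw, hwz⟩ := hz2
    obtain ⟨a', ha', b', hb', hab'⟩ := Submodule.mem_sup.mp hw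
    have hb0 : b = 0 := by
      have hbu : b ∈ u := by
        have : b = z - a := by rw [← hab]; abel
        rw [this]; exact sub_mem hzu (hk ha)
      have : b ∈ u ⊓ u.map J := ⟨hbu, hp hb⟩
      rw [hudisj] at this
      exact this
    have hzk : z ∈ k := by rw [← hab, hb0, add_zero]; exact ha
    have hJa'0 : J a' = 0 := by
      have hJb'u : J b' ∈ u := hJp_le_u (Submodule.mem_map_of_mem hb')
      have h1 : J a' ∈ u := by
        have : J a' = z - J b' := by rw [← hwz, ← hab', map_add]; abel
        rw [this]; exact sub_mem hzu hJb'u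
      have : J a' ∈ u ⊓ u.map J := ⟨h1, ⟨a', hk ha', rfl⟩⟩
      rw [hudisj] at this
      exact this
    have hzJp : z ∈ p.map J := by
      rw [← hwz, ← hab', map_add, hJa'0, zero_add]
      exact Submodule.mem_map_of_mem hb'
    exact ⟨hzk, hzJp⟩
  -- u₁ is an ideal of u
  have hu₁_ideal : ∀ x ∈ u, ∀ y ∈ u₁, ⁅x, y⁆ ∈ u₁ := by
    intro x hx y hy
    obtain ⟨hyk, hyJp⟩ := hy
    have hyh : y ∈ (k ⊔ p) ⊓ (k ⊔ p).map J :=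
      ⟨Submodule.mem_sup_left hyk, Submodule.map_mono le_sup_right hyJp⟩
    exact hh_inter_u _ (hideal₁ x y hyh) (hu x hx y (hu₁_le_u ⟨hyk, hyJp⟩))
  -- g + ig intersected with u is u₂ := k ⊔ p.map J
  have hq_inter_u : ∀ z ∈ (k ⊔ p) ⊔ (k ⊔ p).map J, z ∈ u → z ∈ k ⊔ p.map J := by
    intro z hz hzu
    obtain ⟨w, hw, w', hw', hww⟩ := Submodule.mem_sup.mp hz
    obtain ⟨a, ha, b, hb, hab⟩ := Submodule.mem_sup.mp hw
    obtain ⟨v, hv, hvw⟩ := hw'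
    obtain ⟨a', ha', b', hb', hab'⟩ := Submodule.mem_sup.mp hv
    have hbJa : b + J a' = 0 := by
      have h1 : b + J a' ∈ u.map J :=
        add_mem (hp hb) (Submodule.mem_map_of_mem (hk ha'))
      have h2 : b + J a' ∈ u := by
        have : b + J a' = z - (a + J b') := by
          rw [← hww, ← hab, ← hvw, ← hab', map_add]; abel
        rw [this]
        exact sub_mem hzu (add_mem (hk ha) (hJp_le_u (Submodule.mem_map_of_mem hb')))
      have : b + J a' ∈ u ⊓ u.map J := ⟨h2, h1⟩
      rw [hudisj] at this
      exact this
    have : z = a + J b' := by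
      rw [← hww, ← hab, ← hvw, ← hab', map_add]
      have : b + J a' = 0 := hbJa
      calc a + b + (J a' + J b') = a + J b' + (b + J a') := by abel
      _ = a + J b' := by rw [this, add_zero]
    rw [this]
    exact Submodule.add_mem_sup ha (Submodule.mem_map_of_mem hb')
  -- u₂ is an ideal of u
  have hu₂_ideal : ∀ x ∈ u, ∀ z ∈ k ⊔ p.map J, ⁅x, z⁆ ∈ k ⊔ p.map J := by
    intro x hx z hz
    have hzu : z ∈ u := (sup_le hk hJp_le_u) hz
    have hzq : z ∈ (k ⊔ p) ⊔ (k ⊔ p).map J := by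
      refine (show k ⊔ p.map J ≤ (k ⊔ p) ⊔ (k ⊔ p).map J from sup_le (le_trans le_sup_left le_sup_left)
        (le_trans (Submodule.map_mono le_sup_right) le_sup_right)) hz
    exact hq_inter_u _ (hideal₂ x z hzq) (hu x hx z hzu)
  -- orthogonal projection onto u₁ inside u
  have hproj : ∀ a ∈ u, ∃ b ∈ u₁, a - b ∈ u₁perp := by
    intro a ha
    set B' : LinearMap.BilinForm ℝ u := B.compl₁₂ u.subtype u.subtype with hB'
    have hB'apply : ∀ x y : u, B' x y = B (x : L) (y : L) := fun x y => rfl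
    set W : Submodule ℝ u := u₁.comap u.subtype with hW
    have hrefl : B'.IsRefl := by
      intro x y hxy
      rw [hB'apply] at hxy ⊢
      rw [hBsymm y y.2 x x.2]
      exact hxy
    have hnd : (B'.restrict W).Nondegenerate := by
      refine (LinearMap.IsRefl.nondegenerate_iff_separatingLeft
        (show (B'.restrict W).IsRefl from fun x y hxy => hrefl (x : u) (y : u) hxy)).2 ?_
      intro x hx
      have h0 : B (x : L) (x : L) = 0 := hx x
      by_contra hne
      have hne' : ((x : u) : L) ≠ 0 := by
        intro h
        apply hne
        ext
        exact h
      have := hBpos ((x : u) : L) (x : u).2 hne'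
      rw [h0] at this
      exact lt_irrefl 0 this
    have hcompl := LinearMap.BilinForm.isCompl_orthogonal_of_restrict_nondegenerate hrefl hnd
    have htop : W ⊔ B'.orthogonal W = ⊤ := hcompl.sup_eq_top
    have hmem : (⟨a, ha⟩ : u) ∈ W ⊔ B'.orthogonal W := by rw [htop]; trivial
    obtain ⟨w, hw, w', hw', hww⟩ := Submodule.mem_sup.mp hmem
    refine ⟨(w : L), hw, ?_⟩
    have hsub : a - (w : L) = (w' : L) := by
      have : a = (w : L) + (w' : L) := by
        have := congrArg (Subtype.val) hww
        simpa using this.symm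
      rw [this]; abel
    rw [hsub]
    rw [hmem_perp]
    refine ⟨w'.2, ?_⟩
    intro y hy
    have hy' : (⟨y, hu₁_le_u hy⟩ : u) ∈ W := hy
    have := hw' _ hy'
    rw [hB'apply] at this
    rw [hBsymm _ w'.2 y (hu₁_le_u hy)]
    exact this
  -- p₀.map J ≤ p.map J ⊓ u₁perp
  have hp₀J_le_Jp : p₀.map J ≤ p.map J := Submodule.map_mono inf_le_left
  have hp₀J_le_perp : p₀.map J ≤ u₁perp := by
    calc p₀.map J ≤ (u₁perp.map J).map J := Submodule.map_mono inf_le_right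
    _ = u₁perp := hmapJJ u₁perp
  have hk₀_le_perp : k₀ ≤ u₁perp := inf_le_right
  have hu₀_le_u : u₀ ≤ u := sup_le (le_trans inf_le_left hk) (le_trans hp₀J_le_Jp hJp_le_u)
  have hu₀_le_perp : u₀ ≤ u₁perp := sup_le hk₀_le_perp hp₀J_le_perp
  refine ⟨?_, hu₀_le_u, ?_⟩
  · -- directness
    rw [eq_bot_iff]
    intro x hx
    obtain ⟨hxk₀, hxp₀J⟩ := hx
    have hx₁ : x ∈ u₁ := ⟨hxk₀.1, hp₀J_le_Jp hxp₀J⟩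
    have hxperp : x ∈ u₁perp := hxk₀.2
    simpa using hu₁_inf_perp x hx₁ hxperp
  · -- ideal property
    intro x hx y hy
    have hyu : y ∈ u := hu₀_le_u hy
    have hyperp : y ∈ u₁perp := hu₀_le_perp hy
    have hyu₂ : y ∈ k ⊔ p.map J := (sup_le (le_trans inf_le_left le_sup_left)
      (le_trans hp₀J_le_Jp le_sup_right)) hy
    set z := ⁅x, y⁆ with hzdef
    have hzu : z ∈ u := hu x hx y hyu
    have hzu₂ : z ∈ k ⊔ p.map J := hu₂_ideal x hx y hyu₂
    have hzperp : z ∈ u₁perp := by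
      rw [hmem_perp]
      refine ⟨hzu, ?_⟩
      intro w hw
      have h1 : B z w = - B y ⁅x, w⁆ := hBinv x hx y hyu w (hu₁_le_u hw)
      have h2 : ⁅x, w⁆ ∈ u₁ := hu₁_ideal x hx w hw
      have h3 : B y ⁅x, w⁆ = 0 := ((hmem_perp y).1 hyperp).2 _ h2
      rw [h1, h3, neg_zero]
    -- decompose z
    obtain ⟨a, ha, b, hb, hab⟩ := Submodule.mem_sup.mp hzu₂
    obtain ⟨a₁, ha₁, ha₀⟩ := hproj a (hk ha)
    obtain ⟨b₁, hb₁, hb₀⟩ := hproj b (hJp_le_u hb)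
    have ha₀k : a - a₁ ∈ k₀ := ⟨sub_mem ha ha₁.1, ha₀⟩
    have hb₀Jp : b - b₁ ∈ p.map J := sub_mem hb hb₁.2
    have hb₀p₀J : b - b₁ ∈ p₀.map J := by
      obtain ⟨c, hc, hcb⟩ := hb₀Jp
      refine ⟨c, ⟨hc, ?_⟩, hcb⟩
      refine ⟨-(b - b₁), neg_mem hb₀, ?_⟩
      rw [map_neg, ← hcb, hJJ, neg_neg]
    have hsum0 : a₁ + b₁ = 0 := by
      apply hu₁_inf_perp
      · exact add_mem ha₁ hb₁
      · have heq : a₁ + b₁ = z - (a - a₁) - (b - b₁) := by rw [← hab]; abel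
        rw [heq]
        exact sub_mem (sub_mem hzperp ha₀) hb₀
    have hzeq : z = (a - a₁) + (b - b₁) := by
      have : a + b = (a - a₁) + (b - b₁) + (a₁ + b₁) := by abel
      rw [← hab, this, hsum0, add_zero]
    rw [hzeq]
    exact Submodule.add_mem_sup ha₀k hb₀p₀J
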